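/- If a 3-uniform hypergraph instance of stable hypergraph b-matching is extended by a new vertex x of capacity exceeding the number of hyperedges, with x added to every hyperedge, then the resulting hypergraph is a subtree hypergraph whose underlying tree is a star centered at x, and the stable b-matchings of the original instance correspond bijectively (by adding/removing x) to the stable b-matchings of the extended instance. -/

import Mathlib

open scoped Classical

/-- `M` is a stable `b`-matching of the hypergraph with edge set `E`: it respects the
capacities, and every hyperedge of `E` outside `M` is dominated at some incident vertex. -/
def StableBM {α : Type*} [DecidableEq α] (E : Finset (Finset α)) (b : α → ℕ)
    (pref : α → Finset α → Finset α → Prop) (M : Finset (Finset α)) : Prop :=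
  M ⊆ E ∧ (∀ v, (M.filter (fun e => v ∈ e)).card ≤ b v) ∧
    ∀ e ∈ E, e ∉ M → ∃ v ∈ e, (M.filter (fun e' => v ∈ e')).card = b v ∧
      ∀ f ∈ M, v ∈ f → pref v f e

/-- The star graph on `Option V` centered at `none`. -/
def starGraph (V : Type*) : SimpleGraph (Option V) where
  Adj a b := (a = none ∧ b ≠ none) ∨ (b = none ∧ a ≠ none)
  symm := ⟨by intro a b h; tauto⟩
  loopless := ⟨by intro a h; tauto⟩

namespace StarExtAux

variable {V : Type*} [DecidableEq V]

/-- Adding the new vertex `none` to a hyperedge. -/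
def φ (e : Finset V) : Finset (Option V) := insert none (e.image some)

lemma mem_φ_some {e : Finset V} {v : V} : some v ∈ φ e ↔ v ∈ e := by
  simp [φ]

lemma mem_φ_none (e : Finset V) : none ∈ φ e := by simp [φ]

lemma φ_injective : Function.Injective (φ (V := V)) := by
  intro a b h
  ext v
  rw [← mem_φ_some (e := a), ← mem_φ_some (e := b), h]

lemma filter_image_some (M : Finset (Finset V)) (v : V) :
    ((M.image φ).filter (fun e' => some v ∈ e')).card
      = (M.filter (fun e => v ∈ e)).card := by
  rw [Finset.filter_image]
  rw [Finset.card_image_of_injective _ φ_injective]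
  congr 1
  apply Finset.filter_congr
  intro e _
  simp [mem_φ_some]

lemma filter_image_none (M : Finset (Finset V)) :
    ((M.image φ).filter (fun e' => none ∈ e')).card = M.card := by
  rw [Finset.filter_true_of_mem, Finset.card_image_of_injective _ φ_injective]
  intro e' he'
  obtain ⟨e, _, rfl⟩ := Finset.mem_image.mp he'
  exact mem_φ_none e

lemma starGraph_adj_none {w : Option V} (hw : w ≠ none) : (starGraph V).Adj w none :=
  Or.inr ⟨rfl, hw⟩

lemma starGraph_adj_right {v : V} {w : Option V} (h : (starGraph V).Adj (some v) w) :
    w = none := by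
  rcases h with ⟨h1, _⟩ | ⟨h1, _⟩
  · exact absurd h1 (by simp)
  · exact h1

lemma starGraph_connected : (starGraph V).Connected := by
  haveI : Nonempty (Option V) := ⟨none⟩
  apply SimpleGraph.Connected.mk
  intro a b
  have key : ∀ w : Option V, (starGraph V).Reachable w none := by
    intro w
    rcases eq_or_ne w none with rfl | hw
    · exact SimpleGraph.Reachable.refl _
    · exact (starGraph_adj_none hw).reachable
  exact (key a).trans (key b).symm

lemma starGraph_acyclic : (starGraph V).IsAcyclic := by
  intro u c hc
  have h3 := hc.three_le_length
  cases c with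
  | nil => simp at h3
  | cons h c' =>
    rename_i x
    have hnodup := hc.support_nodup
    -- c = cons h c', c' : Walk x u
    cases c' with
    | nil => simp at h3
    | cons h' c'' =>
      rename_i y
      -- h : u ~ x, h' : x ~ y
      rcases eq_or_ne u none with rfl | hu
      · -- x ≠ none, so y = none
        have hx : x ≠ none := by
          rcases h with ⟨_, hx⟩ | ⟨hx, hne⟩
          · exact hx
          · exact absurd rfl hne
        obtain ⟨v, rfl⟩ := Option.ne_none_iff_exists'.mp hx
        have hy : y = none := starGraph_adj_right h'
        subst hy
        -- c'' : Walk none none; tail = some v :: c''.support, but none appears twice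
        cases c'' with
        | nil =>
          -- cycle of length 2
          simp [SimpleGraph.Walk.length_cons] at h3
        | cons h'' d =>
          rename_i z
          have : ¬ (SimpleGraph.Walk.cons h'' d).support.Nodup := by
            rw [SimpleGraph.Walk.support_cons]
            simp only [List.nodup_cons, not_and]
            intro hnone hnd
            exact hnone (by simpa using d.end_mem_support)
          simp only [SimpleGraph.Walk.support_cons, List.tail_cons] at hnodup
          exact this (List.Nodup.of_cons hnodup)
      · -- u ≠ none, so x = none
        have hx : x = none := by
          rcases h with ⟨hu', _⟩ | ⟨hx, _⟩
          · exact absurd hu' hu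
          · exact hx
        subst hx
        have hy : y ≠ none := by
          rcases h' with ⟨_, hy⟩ | ⟨hy, hne⟩
          · exact hy
          · exact absurd rfl hne
        cases c'' with
        | nil =>
          -- then y = u, c : u → none → u, length 2
          simp [SimpleGraph.Walk.length_cons] at h3
        | cons h'' d =>
          rename_i z
          obtain ⟨w, rfl⟩ := Option.ne_none_iff_exists'.mp hy
          have hz : z = none := starGraph_adj_right h''
          subst hz
          -- support tail = none :: some w :: d.support, none ∈ d.support (start)
          simp only [SimpleGraph.Walk.support_cons, List.tail_cons] at hnodup
          rw [List.nodup_cons] at hnodup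
          exact hnodup.1 (by simp [d.start_mem_support])

lemma induce_connected_of_none_mem (S : Set (Option V)) (hS : none ∈ S) :
    ((starGraph V).induce S).Connected := by
  haveI : Nonempty S := ⟨⟨none, hS⟩⟩
  apply SimpleGraph.Connected.mk
  intro a b
  have key : ∀ w : S, ((starGraph V).induce S).Reachable w ⟨none, hS⟩ := by
    rintro ⟨w, hw⟩
    rcases eq_or_ne w none with rfl | hwne
    · exact SimpleGraph.Reachable.refl _
    · exact SimpleGraph.Adj.reachable (starGraph_adj_none hwne)
  exact (key a).trans (key b).symm

end StarExtAux


theorem star_extension_stable_correspondence {V : Type*} [Fintype V] [DecidableEq V]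
    (E : Finset (Finset V)) (h3 : ∀ e ∈ E, e.card = 3)
    (b : V → ℕ)
    (pref : V → Finset V → Finset V → Prop)
    -- preferences of the extended instance: those of `some v` are induced from `pref v`,
    -- and `none` (the new vertex x) has an arbitrary strict preference `xpref`:
    (pref' : Option V → Finset (Option V) → Finset (Option V) → Prop)
    (hpref' : ∀ v : V, ∀ e1 ∈ E, ∀ e2 ∈ E,
      (pref' (some v) (insert none (e1.image some)) (insert none (e2.image some)) ↔
        pref v e1 e2)) :
    ((starGraph V).IsTree) ∧
    (∀ e' ∈ E.image (fun e => insert (none : Option V) (e.image some)),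
      ((starGraph V).induce (e' : Set (Option V))).Connected) ∧
    (∃ F : {M : Finset (Finset V) // StableBM E b pref M} ≃
        {M' : Finset (Finset (Option V)) //
          StableBM (E.image (fun e => insert (none : Option V) (e.image some)))
            (fun v' => Option.elim v' (E.card + 1) b) pref' M'},
      ∀ M, (F M).val = M.val.image (fun e => insert (none : Option V) (e.image some))) := by
  classical
  refine ⟨⟨StarExtAux.starGraph_connected, StarExtAux.starGraph_acyclic⟩, ?_, ?_⟩
  · intro e' he'
    obtain ⟨e, _, rfl⟩ := Finset.mem_image.mp he'
    exact StarExtAux.induce_connected_of_none_mem _ (by simp)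
  · have hE' : E.image (fun e => insert (none : Option V) (e.image some))
        = E.image StarExtAux.φ := rfl
    have hforward : ∀ M : Finset (Finset V), StableBM E b pref M →
        StableBM (E.image StarExtAux.φ) (fun v' => Option.elim v' (E.card + 1) b) pref'
          (M.image StarExtAux.φ) := by
      intro M hM
      obtain ⟨hsub, hcap, hstab⟩ := hM
      refine ⟨Finset.image_subset_image hsub, ?_, ?_⟩
      · intro v'
        cases v' with
        | none =>
          rw [StarExtAux.filter_image_none]
          exact le_trans (Finset.card_le_card hsub) (Nat.le_succ _)
        | some v =>
          rw [StarExtAux.filter_image_some]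
          exact hcap v
      · intro e' he' hne'
        obtain ⟨e, he, rfl⟩ := Finset.mem_image.mp he'
        have heM : e ∉ M := fun h => hne' (Finset.mem_image_of_mem _ h)
        obtain ⟨v, hv, hsat, hdom⟩ := hstab e he heM
        refine ⟨some v, StarExtAux.mem_φ_some.mpr hv, ?_, ?_⟩
        · rw [StarExtAux.filter_image_some]; exact hsat
        · intro f' hf' hvf'
          obtain ⟨f, hf, rfl⟩ := Finset.mem_image.mp hf'
          have hvf : v ∈ f := StarExtAux.mem_φ_some.mp hvf'
          exact (hpref' v f (hsub hf) e he).mpr (hdom f hf hvf)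
    have himg : ∀ M' : Finset (Finset (Option V)), M' ⊆ E.image StarExtAux.φ →
        (E.filter (fun e => StarExtAux.φ e ∈ M')).image StarExtAux.φ = M' := by
      intro M' hsub
      ext e'
      simp only [Finset.mem_image, Finset.mem_filter]
      constructor
      · rintro ⟨e, ⟨_, h⟩, rfl⟩; exact h
      · intro h
        obtain ⟨e, he, rfl⟩ := Finset.mem_image.mp (hsub h)
        exact ⟨e, ⟨he, h⟩, rfl⟩
    have hbackward : ∀ M' : Finset (Finset (Option V)),
        StableBM (E.image StarExtAux.φ) (fun v' => Option.elim v' (E.card + 1) b) pref' M' →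
        StableBM E b pref (E.filter fun e => StarExtAux.φ e ∈ M') := by
      intro M' hM'
      obtain ⟨hsub, hcap, hstab⟩ := hM'
      have hMimg : (E.filter (fun e => StarExtAux.φ e ∈ M')).image StarExtAux.φ = M' :=
        himg M' hsub
      refine ⟨Finset.filter_subset _ _, ?_, ?_⟩
      · intro v
        have h := hcap (some v)
        rw [← hMimg, StarExtAux.filter_image_some] at h
        exact h
      · intro e he heM
        have hφe : StarExtAux.φ e ∉ M' := fun h => heM (Finset.mem_filter.mpr ⟨he, h⟩)
        obtain ⟨v', hv', hsat, hdom⟩ := hstab _ (Finset.mem_image_of_mem _ he) hφe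
        cases v' with
        | none =>
          exfalso
          have h1 : (M'.filter (fun e' => (none : Option V) ∈ e')).card ≤ M'.card :=
            Finset.card_le_card (Finset.filter_subset _ _)
          have h2 : M'.card ≤ (E.image StarExtAux.φ).card := Finset.card_le_card hsub
          have h3 : (E.image StarExtAux.φ).card ≤ E.card := Finset.card_image_le
          simp only [Option.elim] at hsat
          omega
        | some v =>
          have hve : v ∈ e := StarExtAux.mem_φ_some.mp hv'
          refine ⟨v, hve, ?_, ?_⟩
          · have h := hsat
            simp only [Option.elim] at h
            rw [← hMimg, StarExtAux.filter_image_some] at h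
            exact h
          · intro f hf hvf
            have hfM' : StarExtAux.φ f ∈ M' := (Finset.mem_filter.mp hf).2
            have h := hdom _ hfM' (StarExtAux.mem_φ_some.mpr hvf)
            exact (hpref' v f (Finset.mem_filter.mp hf).1 e he).mp h
    refine ⟨{
      toFun := fun M => ⟨M.val.image StarExtAux.φ, hforward M.val M.prop⟩
      invFun := fun M' => ⟨E.filter (fun e => StarExtAux.φ e ∈ M'.val), hbackward M'.val M'.prop⟩
      left_inv := ?_
      right_inv := ?_ }, fun M => rfl⟩
    · rintro ⟨M, hM⟩
      apply Subtype.ext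
      ext e
      simp only [Finset.mem_filter,
        StarExtAux.φ_injective.mem_finset_image]
      exact ⟨fun h => h.2, fun h => ⟨hM.1 h, h⟩⟩
    · rintro ⟨M', hM'⟩
      exact Subtype.ext (himg M' hM'.1)
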